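/- arXiv:1804.05991 — 2 statements merged into one kernel-verified Lean document; each statement's English description precedes it below -/
import Mathlib

section
/- Let n ≥ 3 be an integer and p > 1. With f(r) = (1−r²)^{n−2}/r^{n−1}, G(r) = ∫_r^1 f(t) dt, and V_p(r) = f(r)²(1−r²)²/(4(n−2)² G(r)^{(p+2)/2}) for r ∈ (0,1), one has lim_{r→0⁺} r^{n(1−p/2⋆)} V_p(r) = (n−2)^{(p−2)/2}/4, where 2⋆ = 2n/(n−2); that is, V_p(r) = c₀(n,p) r^{−n(1−p/2⋆)}(1+o(1)) as r→0⁺ with c₀(n,p) = (n−2)^{(p−2)/2}/4. In particular lim_{r→0⁺} r² V₂(r) = 1/4. -/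
open Real Filter Set

/-- `f n r = (1 - r²)^(n-2) / r^(n-1)`. -/
noncomputable def f (n : ℕ) (r : ℝ) : ℝ := (1 - r ^ 2) ^ (n - 2) / r ^ (n - 1)

/-- `G n r = ∫_r^1 f n t dt`. -/
noncomputable def G (n : ℕ) (r : ℝ) : ℝ := ∫ t in r..(1 : ℝ), f n t

/-- `V n p r = f(r)²(1-r²)² / (4(n-2)² G(r)^((p+2)/2))`. -/
noncomputable def V (n : ℕ) (p r : ℝ) : ℝ :=
  f n r ^ 2 * (1 - r ^ 2) ^ 2 / (4 * ((n : ℝ) - 2) ^ 2 * G n r ^ ((p + 2) / 2))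

lemma f_intble (n : ℕ) {a b : ℝ} (ha : 0 < a) (hb : 0 < b) :
    IntervalIntegrable (f n) MeasureTheory.volume a b := by
  apply ContinuousOn.intervalIntegrable
  apply ContinuousOn.div (by fun_prop) (by fun_prop)
  intro t ht
  have ht0 : 0 < t := lt_of_lt_of_le (lt_min ha hb) ht.1
  exact pow_ne_zero _ ht0.ne'

/-- The key asymptotics: `r^(n-2) G(r) → 1/(n-2)` as `r → 0⁺`. -/
lemma key (n : ℕ) (hn : 3 ≤ n) :
    Tendsto (fun r : ℝ => r ^ (n - 2) * G n r) (nhdsWithin 0 (Set.Ioi 0))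
      (nhds (1 / ((n : ℝ) - 2))) := by
  have hm : (1:ℕ) ≤ n - 2 := by omega
  have hm0 : n - 2 ≠ 0 := by omega
  have hcast : ((n - 2 : ℕ) : ℝ) = (n : ℝ) - 2 := by
    push_cast [Nat.cast_sub (by omega : 2 ≤ n)]; ring
  have hc : (0:ℝ) < (n : ℝ) - 2 := by
    have : (3:ℝ) ≤ (n : ℝ) := by exact_mod_cast hn
    linarith
  set m : ℕ := n - 2 with hmdef
  -- lower and upper bounds
  have lowbd : ∀ r : ℝ, r ∈ Set.Ioo (0:ℝ) 1 →
      (1 - r) ^ m * (1 - (Real.sqrt r) ^ m) / ((n:ℝ) - 2) ≤ r ^ m * G n r := by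
    intro r hr
    obtain ⟨hr0, hr1⟩ := hr
    set s := Real.sqrt r with hs
    have hs0 : 0 < s := Real.sqrt_pos.mpr hr0
    have hrs : r ≤ s := by
      rw [hs, Real.le_sqrt hr0.le hr0.le]
      nlinarith
    have hs1 : s < 1 := by
      rw [hs]
      nlinarith [Real.sq_sqrt hr0.le, Real.sqrt_nonneg r]
    have hsplit : G n r = (∫ t in r..s, f n t) + ∫ t in s..(1:ℝ), f n t := by
      rw [G, ← intervalIntegral.integral_add_adjacent_intervals
        (f_intble n hr0 hs0) (f_intble n hs0 one_pos)]
    have h2 : (0:ℝ) ≤ ∫ t in s..(1:ℝ), f n t := by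
      apply intervalIntegral.integral_nonneg hs1.le
      intro u hu
      have hu0 : 0 < u := lt_of_lt_of_le hs0 hu.1
      have hu1 : u ≤ 1 := hu.2
      apply div_nonneg (pow_nonneg (by nlinarith) _) (pow_nonneg hu0.le _)
    have h1 : (1 - r) ^ m * ((r:ℝ) ^ (-(m:ℤ)) - s ^ (-(m:ℤ))) / ((n:ℝ) - 2)
        ≤ ∫ t in r..s, f n t := by
      have hcomp : ∀ t ∈ Set.Icc r s,
          (1 - r) ^ m * t ^ (-(((m:ℕ):ℤ) + 1)) ≤ f n t := by
        intro t ht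
        have ht0 : 0 < t := lt_of_lt_of_le hr0 ht.1
        have hts : t ≤ s := ht.2
        have ht2 : t ^ 2 ≤ r := by
          calc t ^ 2 ≤ s ^ 2 := by nlinarith
            _ = r := Real.sq_sqrt hr0.le
        have hbase : (1 - r) ^ m ≤ (1 - t ^ 2) ^ m :=
          pow_le_pow_left₀ (by linarith) (by linarith) m
        have htz : t ^ (-(((m:ℕ):ℤ) + 1)) = (t ^ (m + 1))⁻¹ := by
          rw [← zpow_natCast t (m+1), ← zpow_neg]
          norm_num
        rw [htz, f]
        have hnm : n - 1 = m + 1 := by omega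
        rw [hnm, div_eq_mul_inv]
        have hip : (0:ℝ) ≤ (t ^ (m+1))⁻¹ := by positivity
        exact mul_le_mul_of_nonneg_right hbase hip
      have hint1 : IntervalIntegrable (fun t : ℝ => (1 - r) ^ m * t ^ (-(((m:ℕ):ℤ) + 1)))
          MeasureTheory.volume r s := by
        apply IntervalIntegrable.const_mul
        apply intervalIntegral.intervalIntegrable_zpow
        exact Or.inr (Set.notMem_uIcc_of_lt hr0 hs0)
      calc (1 - r) ^ m * ((r:ℝ) ^ (-(m:ℤ)) - s ^ (-(m:ℤ))) / ((n:ℝ) - 2)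
          = ∫ t in r..s, (1 - r) ^ m * t ^ (-(((m:ℕ):ℤ) + 1)) := by
            rw [intervalIntegral.integral_const_mul, integral_zpow]
            · have : (-(((m:ℕ):ℤ) + 1) + 1) = -(m:ℤ) := by ring
              rw [this]
              rw [← hcast]
              push_cast
              field_simp
              have hmR : (m:ℝ) ≠ 0 := by exact_mod_cast hm0
              simp [hmR]
              rw [div_neg, mul_div_cancel_left₀ _ hmR]
              ring
            · exact Or.inr ⟨by omega, Set.notMem_uIcc_of_lt hr0 hs0⟩
        _ ≤ ∫ t in r..s, f n t := by
            apply intervalIntegral.integral_mono_on hrs hint1 (f_intble n hr0 hs0) hcomp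
    have hzr : r ^ m * (r:ℝ) ^ (-(m:ℤ)) = 1 := by
      rw [← zpow_natCast r m, ← zpow_add₀ hr0.ne']
      norm_num
    have hzs : r ^ m * s ^ (-(m:ℤ)) = s ^ m := by
      have hr_eq : r = s * s := (Real.mul_self_sqrt hr0.le).symm
      rw [hr_eq, mul_pow, ← zpow_natCast s m, mul_assoc, ← zpow_add₀ hs0.ne']
      norm_num
    have : (1 - r) ^ m * (1 - s ^ m) / ((n:ℝ) - 2)
        = r ^ m * ((1 - r) ^ m * ((r:ℝ) ^ (-(m:ℤ)) - s ^ (-(m:ℤ))) / ((n:ℝ) - 2)) := by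
      rw [mul_div_assoc']
      congr 1
      linear_combination ((1 - r) ^ m) * hzs - ((1 - r) ^ m) * hzr
    rw [this, hsplit]
    have hrm : (0:ℝ) ≤ r ^ m := by positivity
    calc r ^ m * ((1 - r) ^ m * ((r:ℝ) ^ (-(m:ℤ)) - s ^ (-(m:ℤ))) / ((n:ℝ) - 2))
        ≤ r ^ m * ∫ t in r..s, f n t := by
          exact mul_le_mul_of_nonneg_left h1 hrm
      _ ≤ r ^ m * ((∫ t in r..s, f n t) + ∫ t in s..(1:ℝ), f n t) := by
          apply mul_le_mul_of_nonneg_left _ hrm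
          linarith
  have upbd : ∀ r : ℝ, r ∈ Set.Ioo (0:ℝ) 1 →
      r ^ m * G n r ≤ (1 - r ^ m) / ((n:ℝ) - 2) := by
    intro r hr
    obtain ⟨hr0, hr1⟩ := hr
    have h1 : G n r ≤ ∫ t in r..(1:ℝ), t ^ (-(((m:ℕ):ℤ) + 1)) := by
      rw [G]
      apply intervalIntegral.integral_mono_on hr1.le (f_intble n hr0 one_pos)
      · apply intervalIntegral.intervalIntegrable_zpow
        exact Or.inr (Set.notMem_uIcc_of_lt hr0 one_pos)
      · intro t ht
        have ht0 : 0 < t := lt_of_lt_of_le hr0 ht.1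
        have ht1 : t ≤ 1 := ht.2
        have htz : t ^ (-(((m:ℕ):ℤ) + 1)) = (t ^ (m + 1))⁻¹ := by
          rw [← zpow_natCast t (m+1), ← zpow_neg]
          norm_num
        rw [htz, f]
        have hnm : n - 1 = m + 1 := by omega
        rw [hnm, div_eq_mul_inv]
        have hip : (0:ℝ) ≤ (t ^ (m+1))⁻¹ := by positivity
        have hbase : (1 - t ^ 2) ^ m ≤ 1 := by
          apply pow_le_one₀ (by nlinarith) (by nlinarith)
        calc (1 - t^2) ^ m * (t ^ (m+1))⁻¹ ≤ 1 * (t ^ (m+1))⁻¹ :=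
              mul_le_mul_of_nonneg_right hbase hip
          _ = (t ^ (m+1))⁻¹ := one_mul _
    have h2 : (∫ t in r..(1:ℝ), t ^ (-(((m:ℕ):ℤ) + 1))) = ((r:ℝ) ^ (-(m:ℤ)) - 1) / ((n:ℝ) - 2) := by
      rw [integral_zpow]
      · have : (-(((m:ℕ):ℤ) + 1) + 1) = -(m:ℤ) := by ring
        rw [this, one_zpow, ← hcast]
        push_cast
        field_simp
        have hmR : (m:ℝ) ≠ 0 := by exact_mod_cast hm0
        simp [hmR]
        rw [div_neg, mul_div_cancel_right₀ _ hmR]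
        ring
      · exact Or.inr ⟨by omega, Set.notMem_uIcc_of_lt hr0 one_pos⟩
    have hzr : r ^ m * (r:ℝ) ^ (-(m:ℤ)) = 1 := by
      rw [← zpow_natCast r m, ← zpow_add₀ hr0.ne']
      norm_num
    calc r ^ m * G n r ≤ r ^ m * (((r:ℝ) ^ (-(m:ℤ)) - 1) / ((n:ℝ) - 2)) := by
          rw [← h2]
          exact mul_le_mul_of_nonneg_left (h2 ▸ h1) (by positivity)
      _ = (1 - r ^ m) / ((n:ℝ) - 2) := by
          rw [mul_div_assoc', mul_sub, hzr, mul_one]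
  -- squeeze
  have hlow : Tendsto (fun r : ℝ => (1 - r) ^ m * (1 - (Real.sqrt r) ^ m) / ((n:ℝ) - 2))
      (nhdsWithin 0 (Set.Ioi 0)) (nhds (1 / ((n : ℝ) - 2))) := by
    have hcont : Tendsto (fun r : ℝ => (1 - r) ^ m * (1 - (Real.sqrt r) ^ m) / ((n:ℝ) - 2))
        (nhds 0) (nhds ((1 - 0) ^ m * (1 - (Real.sqrt 0) ^ m) / ((n:ℝ) - 2))) := by
      apply Tendsto.div_const
      exact (((continuous_const.sub continuous_id).pow m).mul
        (continuous_const.sub (Real.continuous_sqrt.pow m))).tendsto 0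
    have : (1 - (0:ℝ)) ^ m * (1 - (Real.sqrt 0) ^ m) / ((n:ℝ) - 2) = 1 / ((n:ℝ) - 2) := by
      rw [Real.sqrt_zero, zero_pow hm0]
      norm_num
    rw [this] at hcont
    exact hcont.mono_left nhdsWithin_le_nhds
  have hup : Tendsto (fun r : ℝ => (1 - r ^ m) / ((n:ℝ) - 2))
      (nhdsWithin 0 (Set.Ioi 0)) (nhds (1 / ((n : ℝ) - 2))) := by
    have hcont : Tendsto (fun r : ℝ => (1 - r ^ m) / ((n:ℝ) - 2))
        (nhds 0) (nhds ((1 - (0:ℝ) ^ m) / ((n:ℝ) - 2))) := by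
      apply Tendsto.div_const
      exact (continuous_const.sub (continuous_pow m)).tendsto 0
    rw [zero_pow hm0, sub_zero] at hcont
    exact hcont.mono_left nhdsWithin_le_nhds
  have hmem : Set.Ioo (0:ℝ) 1 ∈ nhdsWithin (0:ℝ) (Set.Ioi 0) :=
    Ioo_mem_nhdsGT_of_mem (by simp : (0:ℝ) ∈ Set.Ico (0:ℝ) 1)
  apply tendsto_of_tendsto_of_tendsto_of_le_of_le' hlow hup
  · filter_upwards [hmem] with r hr using lowbd r hr
  · filter_upwards [hmem] with r hr using upbd r hr

/-- `lim_{r→0⁺} r^{n(1-p/2⋆)} V_p(r) = (n-2)^{(p-2)/2}/4` where `2⋆ = 2n/(n-2)`;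
in particular `lim_{r→0⁺} r² V₂(r) = 1/4`. -/
theorem stmt_2 (n : ℕ) (hn : 3 ≤ n) (p : ℝ) (hp : 1 < p) :
    Tendsto
      (fun r : ℝ =>
        r ^ ((n : ℝ) * (1 - p / (2 * (n : ℝ) / ((n : ℝ) - 2)))) * V n p r)
      (nhdsWithin 0 (Set.Ioi 0)) (nhds (((n : ℝ) - 2) ^ ((p - 2) / 2) / 4))
    ∧ Tendsto (fun r : ℝ => r ^ 2 * V n 2 r) (nhdsWithin 0 (Set.Ioi 0)) (nhds (1 / 4)) := by
  have hc : (0:ℝ) < (n : ℝ) - 2 := by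
    have : (3:ℝ) ≤ (n : ℝ) := by exact_mod_cast hn
    linarith
  have hn0 : (0:ℝ) < (n:ℝ) := by linarith
  have hcast : ((n - 2 : ℕ) : ℝ) = (n : ℝ) - 2 := by
    push_cast [Nat.cast_sub (by omega : 2 ≤ n)]; ring
  set c : ℝ := (n : ℝ) - 2 with hcdef
  -- general claim, for any p with 1 < p
  have main : ∀ q : ℝ, 1 < q →
      Tendsto
        (fun r : ℝ =>
          r ^ ((n : ℝ) * (1 - q / (2 * (n : ℝ) / ((n : ℝ) - 2)))) * V n q r)
        (nhdsWithin 0 (Set.Ioi 0)) (nhds (((n : ℝ) - 2) ^ ((q - 2) / 2) / 4)) := by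
    intro q hq
    have hkey := key n hn
    -- eventually G is positive
    have hGpos : ∀ᶠ r in nhdsWithin (0:ℝ) (Set.Ioi 0), 0 < G n r := by
      have hev : ∀ᶠ x in nhds (1 / ((n:ℝ) - 2)), (0:ℝ) < x :=
        eventually_gt_nhds (by positivity)
      filter_upwards [hkey.eventually hev, self_mem_nhdsWithin] with r h1 h2
      have hr0 : (0:ℝ) < r := h2
      by_contra hG
      push_neg at hG
      have : r ^ (n-2) * G n r ≤ 0 :=
        mul_nonpos_iff.mpr (Or.inl ⟨le_of_lt (by positivity), hG⟩)
      linarith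
    have hmem : Set.Ioo (0:ℝ) 1 ∈ nhdsWithin (0:ℝ) (Set.Ioi 0) :=
      Ioo_mem_nhdsGT_of_mem (by simp : (0:ℝ) ∈ Set.Ico (0:ℝ) 1)
    -- algebraic identity
    have hid : ∀ᶠ r in nhdsWithin (0:ℝ) (Set.Ioi 0),
        r ^ ((n : ℝ) * (1 - q / (2 * (n : ℝ) / ((n : ℝ) - 2)))) * V n q r
          = (1 - r ^ 2) ^ (2 * n - 2) /
              (4 * c ^ 2 * (r ^ (n - 2) * G n r) ^ ((q + 2) / 2)) := by
      filter_upwards [hGpos, hmem] with r hG hr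
      obtain ⟨hr0, hr1⟩ := hr
      have hrm : (0:ℝ) < r ^ (n-2) := by positivity
      set a : ℝ := (n : ℝ) * (1 - q / (2 * (n : ℝ) / ((n : ℝ) - 2))) with hadef
      have hmul : (r ^ (n-2) * G n r) ^ ((q + 2) / 2)
          = (r ^ (n-2) : ℝ) ^ ((q + 2) / 2) * G n r ^ ((q + 2) / 2) :=
        Real.mul_rpow hrm.le hG.le
      have hrpow : (r ^ (n-2) : ℝ) ^ ((q + 2) / 2) = r ^ (((n-2:ℕ):ℝ) * ((q + 2) / 2)) := by
        rw [Real.rpow_mul hr0.le, Real.rpow_natCast]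
      rw [V, f, hmul, hrpow]
      have hexp : a + ((n-2:ℕ):ℝ) * ((q + 2) / 2) = ((2 * n - 2 : ℕ) : ℝ) := by
        rw [hadef, hcast]
        have h2n : ((2 * n - 2 : ℕ) : ℝ) = 2 * (n:ℝ) - 2 := by
          push_cast [Nat.cast_sub (by omega : 2 ≤ 2*n)]; ring
        rw [h2n]
        field_simp
        ring
      have hnum : ((1 - r ^ 2) ^ (n - 2) / r ^ (n - 1)) ^ 2 * (1 - r ^ 2) ^ 2
          = (1 - r ^ 2) ^ (2 * n - 2) / r ^ (2 * n - 2) := by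
        rw [div_pow, div_mul_eq_mul_div]
        congr 1
        · rw [← pow_mul, ← pow_add]
          congr 1
          omega
        · rw [← pow_mul]
          congr 1
          omega
      rw [hnum]
      have hr2n : (0:ℝ) < r ^ (2*n-2) := by positivity
      have hGq : (0:ℝ) < G n r ^ ((q + 2) / 2) := Real.rpow_pos_of_pos hG _
      have hra : (0:ℝ) < r ^ a := Real.rpow_pos_of_pos hr0 _
      have hrb : (0:ℝ) < r ^ (((n-2:ℕ):ℝ) * ((q + 2) / 2)) := Real.rpow_pos_of_pos hr0 _
      have hcomb : r ^ a * r ^ (((n-2:ℕ):ℝ) * ((q + 2) / 2)) = r ^ (2*n-2) := by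
        rw [← Real.rpow_add hr0, hexp, Real.rpow_natCast]
      rw [hcdef]
      rw [div_div, ← mul_div_assoc]
      rw [div_eq_div_iff (by positivity) (by positivity)]
      linear_combination (4 * ((n:ℝ)-2)^2 * G n r ^ ((q + 2) / 2) * (1 - r ^ 2) ^ (2 * n - 2)) * hcomb
    -- limit of the simplified expression
    have hden : Tendsto (fun r : ℝ => 4 * c ^ 2 * (r ^ (n - 2) * G n r) ^ ((q + 2) / 2))
        (nhdsWithin 0 (Set.Ioi 0)) (nhds (4 * c ^ 2 * (1 / c) ^ ((q + 2) / 2))) := by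
      apply Tendsto.const_mul
      exact hkey.rpow_const (Or.inl (by positivity))
    have hnumt : Tendsto (fun r : ℝ => (1 - r ^ 2) ^ (2 * n - 2))
        (nhdsWithin 0 (Set.Ioi 0)) (nhds 1) := by
      have : Tendsto (fun r : ℝ => (1 - r ^ 2) ^ (2 * n - 2)) (nhds 0)
          (nhds ((1 - (0:ℝ) ^ 2) ^ (2 * n - 2))) :=
        ((continuous_const.sub (continuous_pow 2)).pow _).tendsto 0
      simp only [ne_eq, OfNat.ofNat_ne_zero, not_false_eq_true, zero_pow, sub_zero,
        one_pow] at this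
      exact this.mono_left nhdsWithin_le_nhds
    have hdenne : 4 * c ^ 2 * (1 / c) ^ ((q + 2) / 2) ≠ 0 := by
      have : (0:ℝ) < (1 / c) ^ ((q + 2) / 2) := Real.rpow_pos_of_pos (by positivity) _
      positivity
    have hval : (1:ℝ) / (4 * c ^ 2 * (1 / c) ^ ((q + 2) / 2)) = c ^ ((q - 2) / 2) / 4 := by
      rw [one_div c, Real.inv_rpow hc.le]
      have h1 : c ^ ((q + 2) / 2) = c ^ ((q - 2) / 2) * c ^ (2:ℝ) := by
        rw [← Real.rpow_add hc]
        congr 1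
        ring
      have h2 : c ^ (2:ℝ) = c ^ (2:ℕ) := by
        rw [← Real.rpow_natCast c 2]
        norm_num
      rw [h1, h2]
      have hq2 : (0:ℝ) < c ^ ((q - 2) / 2) := Real.rpow_pos_of_pos hc _
      field_simp
    have := hnumt.div hden hdenne
    rw [show (1:ℝ) / (4 * c ^ 2 * (1 / c) ^ ((q + 2) / 2)) = c ^ ((q - 2) / 2) / 4 from hval] at this
    exact Tendsto.congr' (hid.mono fun r hr => hr.symm) this
  constructor
  · exact main p hp
  · have h2 := main 2 (by norm_num)
    have hval : ((n:ℝ) - 2) ^ ((2 - 2 : ℝ) / 2) / 4 = 1 / 4 := by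
      norm_num
    rw [hval] at h2
    apply Tendsto.congr' _ h2
    filter_upwards [self_mem_nhdsWithin] with r hr
    have hr0 : (0:ℝ) < r := hr
    have hexp : (n : ℝ) * (1 - 2 / (2 * (n : ℝ) / ((n : ℝ) - 2))) = 2 := by
      field_simp
      ring
    rw [hexp]
    congr 1
    rw [show (2:ℝ) = ((2:ℕ):ℝ) by norm_num, Real.rpow_natCast]
end

section
/- Let n ≥ 3 be an integer and p > 1. With f(r) = (1−r²)^{n−2}/r^{n−1}, G(r) = ∫_r^1 f(t) dt, and V_p(r) = f(r)²(1−r²)²/(4(n−2)² G(r)^{(p+2)/2}) for r ∈ (0,1), one has lim_{r→1⁻} (1−r)^{(n−1)(p−2)/2} V_p(r) = (2^{2n−2}/(4(n−2)²))·((n−1)/2^{n−2})^{(p+2)/2}, a finite positive number; that is, V_p(r) = c₁(n,p)(1−r)^{−(n−1)(p−2)/2}(1+o(1)) as r→1⁻. In particular, lim_{r→1⁻} V₂(r) = ((n−1)/(n−2))², so V₂ has a finite positive limit at r = 1. -/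
open Real Filter Set

lemma f_contAt (n : ℕ) {r : ℝ} (hr : r ≠ 0) : ContinuousAt (f n) r := by
  unfold f
  exact ContinuousAt.div (by fun_prop) (by fun_prop) (pow_ne_zero _ hr)

lemma f_intble_s3 (n : ℕ) {r s : ℝ} (hr : 0 < r) (hs : 0 < s) :
    IntervalIntegrable (f n) MeasureTheory.volume r s := by
  apply ContinuousOn.intervalIntegrable
  intro x hx
  have hx0 : 0 < x := lt_of_lt_of_le (lt_min hr hs) hx.1
  exact (f_contAt n hx0.ne').continuousWithinAt

lemma f_pos (n : ℕ) {r : ℝ} (hr : 0 < r) (hr1 : r < 1) : 0 < f n r := by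
  unfold f
  apply div_pos
  · apply pow_pos; nlinarith
  · exact pow_pos hr _

lemma G_hasDeriv (n : ℕ) {r : ℝ} (hr : 0 < r) : HasDerivAt (G n) (-(f n r)) r := by
  apply intervalIntegral.integral_hasDerivAt_left (f_intble_s3 n hr one_pos)
  · exact ContinuousAt.stronglyMeasurableAtFilter isOpen_Ioi
      (fun x hx => f_contAt n (ne_of_gt hx)) r hr
  · exact f_contAt n hr.ne'

lemma G_pos (n : ℕ) {r : ℝ} (hr : 0 < r) (hr1 : r < 1) : 0 < G n r := by
  apply intervalIntegral.intervalIntegral_pos_of_pos_on (f_intble_s3 n hr one_pos)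
    (fun x hx => f_pos n (hr.trans hx.1) hx.2) hr1

lemma G_tendsto_zero (n : ℕ) : Tendsto (G n) (nhdsWithin 1 (Set.Iio 1)) (nhds 0) := by
  have h := (G_hasDeriv n one_pos).continuousAt.tendsto
  have hG1 : G n 1 = 0 := intervalIntegral.integral_same
  rw [hG1] at h
  exact h.mono_left nhdsWithin_le_nhds

lemma ev_Ioo : ∀ᶠ r in nhdsWithin (1:ℝ) (Set.Iio 1), r ∈ Set.Ioo (0:ℝ) 1 := by
  filter_upwards [self_mem_nhdsWithin,
    eventually_nhdsWithin_of_eventually_nhds (eventually_gt_nhds (by norm_num : (0:ℝ) < 1))]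
    with r h1 h2
  exact ⟨h2, h1⟩

/-- Key asymptotic: `G n r / (1-r)^(n-1) → 2^(n-2)/(n-1)` as `r → 1⁻`. -/
lemma G_ratio (n : ℕ) (hn : 3 ≤ n) :
    Tendsto (fun r : ℝ => G n r / (1 - r) ^ (n - 1)) (nhdsWithin 1 (Set.Iio 1))
      (nhds ((2:ℝ) ^ (n - 2) / ((n:ℝ) - 1))) := by
  have hn1 : (0:ℝ) < (n:ℝ) - 1 := by
    have : (3:ℝ) ≤ (n:ℝ) := by exact_mod_cast hn
    linarith
  apply HasDerivAt.lhopital_zero_nhdsLT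
    (f' := fun r => -(f n r)) (g' := fun r => (↑(n-1) * (1 - r) ^ (n - 1 - 1)) * (-1))
  · filter_upwards [ev_Ioo] with r hr
    exact G_hasDeriv n hr.1
  · filter_upwards [ev_Ioo] with r hr
    exact (HasDerivAt.const_sub 1 (hasDerivAt_id r)).pow (n-1)
  · filter_upwards [ev_Ioo] with r hr
    have h1 : (0:ℝ) < 1 - r := by linarith [hr.2]
    have : (0:ℝ) < (↑(n-1) : ℝ) := by
      have : 1 ≤ n - 1 := by omega
      exact_mod_cast Nat.lt_of_lt_of_le Nat.zero_lt_one this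
    positivity
  · exact G_tendsto_zero n
  · have : Tendsto (fun r : ℝ => (1 - r) ^ (n - 1)) (nhds 1) (nhds ((1 - 1:ℝ) ^ (n-1))) :=
      Continuous.tendsto (by fun_prop) 1
    rw [show ((1:ℝ) - 1) ^ (n-1) = 0 by rw [sub_self]; exact zero_pow (by omega)] at this
    exact this.mono_left nhdsWithin_le_nhds
  · -- ratio of derivatives
    have key : Tendsto (fun r : ℝ => (1 + r) ^ (n - 2) / (((n:ℝ) - 1) * r ^ (n - 1)))
        (nhdsWithin 1 (Set.Iio 1)) (nhds ((2:ℝ) ^ (n - 2) / ((n:ℝ) - 1))) := by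
      have hc : ContinuousAt (fun r : ℝ => (1 + r) ^ (n - 2) / (((n:ℝ) - 1) * r ^ (n - 1))) 1 := by
        apply ContinuousAt.div (by fun_prop) (by fun_prop)
        simp only [one_pow, mul_one]
        exact ne_of_gt hn1
      have := hc.tendsto.mono_left (nhdsWithin_le_nhds (s := Set.Iio 1))
      norm_num at this
      convert this using 2
    apply key.congr'
    filter_upwards [ev_Ioo] with r hr
    have h1 : (0:ℝ) < 1 - r := by linarith [hr.2]
    have hrpos := hr.1
    have hnn : (0:ℝ) < (↑(n-1) : ℝ) := by
      have : (1:ℕ) ≤ n - 1 := by omega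
      exact_mod_cast this.trans_lt' Nat.zero_lt_one
    have hf : f n r = (1 - r) ^ (n-2) * (1 + r) ^ (n - 2) / r ^ (n-1) := by
      unfold f
      rw [show 1 - r^2 = (1-r)*(1+r) by ring, mul_pow]
    rw [hf]
    rw [show n - 1 - 1 = n - 2 by omega, Nat.cast_sub (by omega : 1 ≤ n), Nat.cast_one]
    field_simp

/-- Main asymptotic lemma, for arbitrary exponent `q`. -/
lemma main_asymp (n : ℕ) (hn : 3 ≤ n) (q : ℝ) :
    Tendsto (fun r : ℝ => (1 - r) ^ (((n : ℝ) - 1) * (q - 2) / 2) * V n q r)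
      (nhdsWithin 1 (Set.Iio 1))
      (nhds (((2 : ℝ) ^ (2 * n - 2) / (4 * ((n : ℝ) - 2) ^ 2)) *
        (((n : ℝ) - 1) / (2 : ℝ) ^ (n - 2)) ^ ((q + 2) / 2))) := by
  have hn1 : (0:ℝ) < (n:ℝ) - 1 := by
    have : (3:ℝ) ≤ (n:ℝ) := by exact_mod_cast hn
    linarith
  have hn2 : (0:ℝ) < (n:ℝ) - 2 := by
    have : (3:ℝ) ≤ (n:ℝ) := by exact_mod_cast hn
    linarith
  set c : ℝ := (2:ℝ) ^ (n - 2) / ((n:ℝ) - 1) with hc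
  have hcpos : 0 < c := div_pos (pow_pos two_pos _) hn1
  set s : ℝ := (q + 2) / 2 with hs
  -- the "nice" function
  set T : ℝ → ℝ := fun r => (1 + r) ^ (2*n - 2) /
    (r ^ (2*n - 2) * (4 * ((n:ℝ) - 2) ^ 2) * (G n r / (1 - r) ^ (n-1)) ^ s) with hT
  have hTlim : Tendsto T (nhdsWithin 1 (Set.Iio 1))
      (nhds (((2:ℝ)^(2*n-2) / (4*((n:ℝ)-2)^2)) * (((n:ℝ)-1)/(2:ℝ)^(n-2)) ^ s)) := by
    have hnum : Tendsto (fun r : ℝ => (1 + r) ^ (2*n-2)) (nhdsWithin 1 (Set.Iio 1))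
        (nhds ((2:ℝ)^(2*n-2))) := by
      have : ContinuousAt (fun r : ℝ => (1 + r) ^ (2*n-2)) 1 := by fun_prop
      have h := this.tendsto.mono_left (nhdsWithin_le_nhds (s := Set.Iio 1))
      norm_num at h
      exact h
    have hden : Tendsto (fun r : ℝ => r ^ (2*n-2) * (4 * ((n:ℝ) - 2) ^ 2) *
        (G n r / (1 - r) ^ (n-1)) ^ s) (nhdsWithin 1 (Set.Iio 1))
        (nhds (1 * (4 * ((n:ℝ) - 2) ^ 2) * c ^ s)) := by
      apply Tendsto.mul
      apply Tendsto.mul_const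
      · have : ContinuousAt (fun r : ℝ => r ^ (2*n-2)) 1 := by fun_prop
        have h := this.tendsto.mono_left (nhdsWithin_le_nhds (s := Set.Iio 1))
        norm_num at h
        exact h
      · exact (G_ratio n hn).rpow_const (Or.inl hcpos.ne')
    have hne : 1 * (4 * ((n:ℝ) - 2) ^ 2) * c ^ s ≠ 0 := by
      have := Real.rpow_pos_of_pos hcpos s
      positivity
    have := hnum.div hden hne
    convert this using 2
    · rfl
    rw [show ((n:ℝ)-1)/(2:ℝ)^(n-2) = c⁻¹ by rw [hc, inv_div], Real.inv_rpow hcpos.le]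
    have hcs : c ^ s ≠ 0 := (Real.rpow_pos_of_pos hcpos s).ne'
    field_simp
  apply hTlim.congr'
  filter_upwards [ev_Ioo] with r hr
  have h1 : (0:ℝ) < 1 - r := by linarith [hr.2]
  have hrpos := hr.1
  have hG := G_pos n hrpos hr.2
  set u : ℝ := 1 - r with hu
  set Q : ℝ := G n r / u ^ (n-1) with hQ
  have hQpos : 0 < Q := div_pos hG (pow_pos h1 _)
  have hGQ : G n r = Q * u ^ (n-1) := by
    rw [hQ, div_mul_cancel₀ _ (pow_ne_zero _ h1.ne')]
  have hGs : G n r ^ s = Q ^ s * u ^ (((n:ℝ) - 1) * s) := by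
    rw [hGQ, Real.mul_rpow hQpos.le (pow_nonneg h1.le _), ← Real.rpow_natCast u (n-1),
      ← Real.rpow_mul h1.le]
    congr 2
    rw [Nat.cast_sub (by omega), Nat.cast_one]
  have hu3 : u ^ (((n:ℝ) - 1) * (q - 2) / 2) * u ^ (2*n - 2 : ℕ) = u ^ (((n:ℝ) - 1) * s) := by
    rw [← Real.rpow_natCast u (2*n-2), ← Real.rpow_add h1]
    congr 1
    rw [Nat.cast_sub (by omega : 2 ≤ 2*n), Nat.cast_mul, Nat.cast_two, hs]
    ring
  have hN : f n r ^ 2 * (1 - r ^ 2) ^ 2 = (u * (1 + r)) ^ (2*n - 2) / r ^ (2*n - 2) := by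
    unfold f
    rw [show 1 - r^2 = u * (1+r) by rw [hu]; ring, div_pow, ← pow_mul, ← pow_mul,
      div_mul_eq_mul_div, ← pow_add]
    congr 2 <;> omega
  rw [hT]
  simp only [V, hGs, hN, ← hQ]
  have hQs : (0:ℝ) < Q ^ s := Real.rpow_pos_of_pos hQpos s
  have hus : (0:ℝ) < u ^ (((n:ℝ) - 1) * s) := Real.rpow_pos_of_pos h1 _
  rw [mul_pow]
  field_simp
  rw [hu3, ← hs, hGs, show G n r / (1 - r) ^ (n - 1) = Q from rfl]
  field_simp

set_option linter.unusedVariables false in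
/-- `lim_{r→1⁻} (1-r)^{(n-1)(p-2)/2} V_p(r)
  = (2^{2n-2}/(4(n-2)²))·((n-1)/2^{n-2})^{(p+2)/2}`;
in particular `lim_{r→1⁻} V₂(r) = ((n-1)/(n-2))²`. -/
theorem stmt_3 (n : ℕ) (hn : 3 ≤ n) (p : ℝ) (hp : 1 < p) :
    Tendsto (fun r : ℝ => (1 - r) ^ (((n : ℝ) - 1) * (p - 2) / 2) * V n p r)
      (nhdsWithin 1 (Set.Iio 1))
      (nhds (((2 : ℝ) ^ (2 * n - 2) / (4 * ((n : ℝ) - 2) ^ 2)) *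
        (((n : ℝ) - 1) / (2 : ℝ) ^ (n - 2)) ^ ((p + 2) / 2)))
    ∧ Tendsto (fun r : ℝ => V n 2 r) (nhdsWithin 1 (Set.Iio 1))
      (nhds ((((n : ℝ) - 1) / ((n : ℝ) - 2)) ^ 2)) := by
  have hn2 : (0:ℝ) < (n:ℝ) - 2 := by
    have : (3:ℝ) ≤ (n:ℝ) := by exact_mod_cast hn
    linarith
  constructor
  · exact main_asymp n hn p
  · have h := main_asymp n hn 2
    simp only [show ((n:ℝ) - 1) * (2 - 2) / 2 = 0 by ring, Real.rpow_zero, one_mul] at h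
    rw [show ((2:ℝ) + 2)/2 = ((2:ℕ):ℝ) by norm_num, Real.rpow_natCast] at h
    have e2 : (2:ℝ)^(2*n-2)/(4*((n:ℝ)-2)^2) * (((n:ℝ)-1)/(2:ℝ)^(n-2))^(2:ℕ)
        = (((n:ℝ)-1)/((n:ℝ)-2))^2 := by
      rw [show 2*n-2 = 2+(n-2)*2 by omega, pow_add, pow_mul]
      have h2 : ((2:ℝ)^(n-2)) ≠ 0 := by positivity
      field_simp
      ring
    rw [e2] at h
    exact h
end
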